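/- arXiv:1706.08689 — 3 statements merged into one kernel-verified Lean document; each statement's English description precedes it below -/
import Mathlib

section
/- In the disjoint fibring of the Hilbert calculi for classical conjunction and classical disjunction (rules as in the standard axiomatizations: ∧-elimination left/right, ∧-introduction, ∨-introduction, ∨-idempotence, ∨-commutativity, ∨-associativity), the dual absorption law fails: p∨(p∧q) ⊬ p. -/
/-- Formulas over variables with binary connectives ∧ and ∨. -/
inductive Fm where
  | var : ℕ → Fm
  | and : Fm → Fm → Fm
  | or : Fm → Fm → Fm

/-- Derivability in the disjoint fibring of the Hilbert calculus for classical
conjunction with the Hilbert calculus for classical disjunction: the smallest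
consequence relation containing the premises and closed under all substitution
instances of the rules (closure under cut and monotonicity is built in). -/
inductive Deriv : Set Fm → Fm → Prop
  | prem {Γ A} : A ∈ Γ → Deriv Γ A
  -- conjunction rules
  | andE1 {Γ A B} : Deriv Γ (Fm.and A B) → Deriv Γ A
  | andE2 {Γ A B} : Deriv Γ (Fm.and A B) → Deriv Γ B
  | andI {Γ A B} : Deriv Γ A → Deriv Γ B → Deriv Γ (Fm.and A B)
  -- disjunction rules
  | orI {Γ A} (B) : Deriv Γ A → Deriv Γ (Fm.or A B)
  | orIdem {Γ A} : Deriv Γ (Fm.or A A) → Deriv Γ A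
  | orComm {Γ A B} : Deriv Γ (Fm.or A B) → Deriv Γ (Fm.or B A)
  | orAssoc {Γ A B C} : Deriv Γ (Fm.or A (Fm.or B C)) → Deriv Γ (Fm.or (Fm.or A B) C)



def ovv : Fin 3 → Fin 3 → Fin 3 := fun x y => if x = y then x else 2
def avv : Fin 3 → Fin 3 → Fin 3 := min

def ev (v : ℕ → Fin 3) : Fm → Fin 3
  | .var n => v n
  | .and A B => avv (ev v A) (ev v B)
  | .or A B => ovv (ev v A) (ev v B)

lemma avv2 : ∀ a b : Fin 3, avv a b = 2 ↔ (a = 2 ∧ b = 2) := by decide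
lemma ovv2l : ∀ a b : Fin 3, a = 2 → ovv a b = 2 := by decide
lemma ovvIdem : ∀ a : Fin 3, ovv a a = 2 → a = 2 := by decide
lemma ovvComm : ∀ a b : Fin 3, ovv a b = ovv b a := by decide
lemma ovvAssoc : ∀ a b c : Fin 3, ovv a (ovv b c) = ovv (ovv a b) c := by decide

lemma sound (v : ℕ → Fin 3) {Γ A} (h : Deriv Γ A)
    (hΓ : ∀ B ∈ Γ, ev v B = 2) : ev v A = 2 := by
  induction h with
  | prem hA => exact hΓ _ hA
  | andE1 _ ih => exact ((avv2 _ _).1 (by simpa [ev] using ih)).1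
  | andE2 _ ih => exact ((avv2 _ _).1 (by simpa [ev] using ih)).2
  | andI _ _ ih1 ih2 => simp [ev]; exact (avv2 _ _).2 ⟨ih1, ih2⟩
  | orI B _ ih => simp [ev]; exact ovv2l _ _ (ih)
  | orIdem _ ih => exact ovvIdem _ (by simpa [ev] using ih)
  | orComm _ ih => simpa [ev, ovvComm] using ih
  | orAssoc _ ih => simp [ev]; rw [← ovvAssoc]; simpa [ev] using ih

/-- the dual absorption law fails in the fibring: p ∨ (p ∧ q) ⊬ p. -/
theorem stmt2 (p q : ℕ) (hpq : p ≠ q) :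
    ¬ Deriv {Fm.or (Fm.var p) (Fm.and (Fm.var p) (Fm.var q))} (Fm.var p) := by
  intro h
  have := sound (fun n => if n = p then 1 else 0) h (by
    intro B hB
    simp only [Set.mem_singleton_iff] at hB
    subst hB
    simp [ev, hpq, (Ne.symm hpq)]
    rfl)
  simp [ev] at this
end

section
/- Let φ : Bool^k → Bool be a very significant Boolean function: φ is neither constantly true nor constantly false, and φ is not a projection-conjunction. Let I = {i : for all x, φ(x) = true implies x_i = true} be the set of projective components. Then there exist valuations giving a countermodel to the substitution instance: there is an assignment v : variables → Bool such that v satisfies φ(p₁,…,p_k) but falsifies φ(q₁,…,q_k), where q_i = p_i for i ∈ I and q_i = p_{k+i} (fresh variables) for i ∉ I. -/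
open Classical in
/-- if φ : Bool^k → Bool is very significant (neither constantly
true nor constantly false, and not a projection-conjunction), and I is its set
of projective components, then there are valuations v, w such that v satisfies
φ(p₁,…,p_k) while the instance with the variables outside I replaced by fresh
variables (valued by w) is falsified. -/
theorem stmt9 (k : ℕ) (φ : (Fin k → Bool) → Bool)
    (hTop : ¬ ∀ x, φ x = true) (hBot : ¬ ∀ x, φ x = false)
    (hPC : ¬ ∃ J : Finset (Fin k), ∀ x, φ x = true ↔ ∀ i ∈ J, x i = true)
    (I : Set (Fin k)) (hI : ∀ i, i ∈ I ↔ ∀ x, φ x = true → x i = true) :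
    ∃ v w : Fin k → Bool,
      φ v = true ∧ φ (fun i => if i ∈ I then v i else w i) = false := by
  push_neg at hBot
  obtain ⟨v, hv⟩ := hBot
  rw [Bool.ne_false_iff] at hv
  have hvI : ∀ i ∈ I, v i = true := fun i hi => (hI i).mp hi v hv
  -- find w with φ(true on I, w outside) = false
  by_cases hw : ∃ w : Fin k → Bool, φ (fun i => if i ∈ I then true else w i) = false
  · obtain ⟨w, hwf⟩ := hw
    refine ⟨v, w, hv, ?_⟩
    convert hwf using 2
    funext i
    by_cases hi : i ∈ I <;> simp [hi, hvI i]
  · exfalso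
    push_neg at hw
    apply hPC
    refine ⟨I.toFinset, fun x => ⟨?_, ?_⟩⟩
    · intro hx i hi
      exact (hI i).mp (Set.mem_toFinset.mp hi) x hx
    · intro hx
      have hx' : ∀ i ∈ I, x i = true := fun i hi => hx i (Set.mem_toFinset.mpr hi)
      have := hw x
      rw [Bool.ne_false_iff] at this
      convert this using 2
      funext i
      by_cases hi : i ∈ I <;> simp [hi, hx' i]
end

section
/- In the two-element Boolean matrix semantics, for every set Γ ∪ {B, C} of formulas in the pure biconditional language (connective ↔ only), Γ ∪ {B} ⊨ C if and only if Γ ⊨ C or Γ ⊨ B ↔ C. -/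
/-- Formulas of the pure biconditional language. -/
inductive IffFm where
  | var : ℕ → IffFm
  | iff : IffFm → IffFm → IffFm

/-- Two-valued evaluation, interpreting ↔ as equality on Bool. -/
def IffFm.eval (v : ℕ → Bool) : IffFm → Bool
  | .var n => v n
  | .iff A B => A.eval v == B.eval v

/-- Semantic consequence over the two-element Boolean matrix. -/
def IffSem (Γ : Set IffFm) (C : IffFm) : Prop :=
  ∀ v : ℕ → Bool, (∀ A ∈ Γ, A.eval v = true) → C.eval v = true

lemma eval_true (A : IffFm) : A.eval (fun _ => true) = true := by
  induction A with
  | var n => rfl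
  | iff P Q ihP ihQ => simp [IffFm.eval, ihP, ihQ]

lemma eval_malcev (A : IffFm) (v₁ v₂ v₃ : ℕ → Bool) :
    A.eval (fun n => xor (xor (v₁ n) (v₂ n)) (v₃ n)) =
      xor (xor (A.eval v₁) (A.eval v₂)) (A.eval v₃) := by
  induction A with
  | var n => rfl
  | iff P Q ihP ihQ =>
    simp only [IffFm.eval, ihP, ihQ]
    cases P.eval v₁ <;> cases P.eval v₂ <;> cases P.eval v₃ <;>
      cases Q.eval v₁ <;> cases Q.eval v₂ <;> cases Q.eval v₃ <;> rfl

/-- Γ ∪ {B} ⊨ C iff Γ ⊨ C or Γ ⊨ B ↔ C, in the pure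
biconditional language. -/
theorem stmt10 (Γ : Set IffFm) (B C : IffFm) :
    IffSem (Γ ∪ {B}) C ↔ (IffSem Γ C ∨ IffSem Γ (IffFm.iff B C)) := by
  constructor
  · intro h
    by_contra hc
    push_neg at hc
    obtain ⟨hC, hBC⟩ := hc
    simp only [IffSem, not_forall] at hC hBC
    obtain ⟨v₁, hΓ1, hC1⟩ := hC
    obtain ⟨v₂, hΓ2, hBC2⟩ := hBC
    -- At v₁ : Γ true, C false, hence B false.
    have hC1' : C.eval v₁ = false := by
      cases hc : C.eval v₁ with
      | true => exact absurd hc hC1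
      | false => rfl
    have hB1 : B.eval v₁ = false := by
      by_contra hb
      have hb' : B.eval v₁ = true := by
        cases h' : B.eval v₁ with
        | true => rfl
        | false => exact absurd h' hb
      have := h v₁ (by
        intro A hA
        rcases hA with hA | hA
        · exact hΓ1 A hA
        · rcases hA; exact hb')
      rw [hC1'] at this; exact Bool.false_ne_true this
    -- At v₂ : Γ true, B ↔ C false; B must be false (else C true and B↔C true).
    have hB2 : B.eval v₂ = false := by
      cases hb : B.eval v₂ with
      | false => rfl
      | true =>
        have hc2 := h v₂ (by
          intro A hA
          rcases hA with hA | hA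
          · exact hΓ2 A hA
          · rcases hA; exact hb)
        exfalso
        apply hBC2
        simp [IffFm.eval, hb, hc2]
    have hC2 : C.eval v₂ = true := by
      cases hc2 : C.eval v₂ with
      | true => rfl
      | false =>
        exfalso; apply hBC2; simp [IffFm.eval, hB2, hc2]
    -- Mal'cev combination of v₁, v₂ and the all-true valuation.
    set v₃ : ℕ → Bool := fun n => xor (xor (v₁ n) (v₂ n)) true with hv₃
    have key : ∀ A : IffFm,
        A.eval v₃ = xor (xor (A.eval v₁) (A.eval v₂)) true := by
      intro A
      have := eval_malcev A v₁ v₂ (fun _ => true)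
      rw [eval_true] at this
      exact this
    have hΓ3 : ∀ A ∈ Γ ∪ ({B} : Set IffFm), A.eval v₃ = true := by
      intro A hA
      rcases hA with hA | hA
      · rw [key, hΓ1 A hA, hΓ2 A hA]; rfl
      · rcases hA; rw [key, hB1, hB2]; rfl
    have := h v₃ hΓ3
    rw [key, hC1', hC2] at this
    exact Bool.false_ne_true this
  · rintro (h | h) v hv
    · exact h v (fun A hA => hv A (Or.inl hA))
    · have hB : B.eval v = true := hv B (Or.inr rfl)
      have := h v (fun A hA => hv A (Or.inl hA))
      simp only [IffFm.eval, hB, Bool.true_beq] at this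
      exact this
end
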